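/- (Freedman's Bennett inequality for supermartingale increments.) Let (X_i)_{1≤i≤n} be real random variables adapted to (F_i) with X_i ≤ 1 a.s. and E[X_i | F_{i-1}] ≤ 0 a.s. Then for all a ≥ 0 and b > 0, P( Σ_{i=1}^n X_i ≥ a, Σ_{i=1}^n E[X_i² | F_{i-1}] ≤ b ) ≤ exp(−b h(a/b)), where h(u) = (1+u)log(1+u) − u. -/

import Mathlib

open MeasureTheory

/-- Freedman's Bennett inequality: if `X_i ≤ 1` a.s. and `E[X_i|ℱ_{i-1}] ≤ 0` a.s.,
then `P(∑ X_i ≥ a, ∑ E[X_i²|ℱ_{i-1}] ≤ b) ≤ exp(−b h(a/b))` where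
`h(u) = (1+u)log(1+u) − u`. -/
lemma exp_le_quad_of_nonpos {t : ℝ} (ht : t ≤ 0) : Real.exp t ≤ 1 + t + t^2/2 := by
  have hd : ∀ x : ℝ, HasDerivAt (fun t : ℝ => 1 + t + t^2/2 - Real.exp t)
      (1 + x - Real.exp x) x := by
    intro x
    have h1 : HasDerivAt (fun t : ℝ => 1 + t + t^2/2 - Real.exp t)
        (0 + 1 + (2 * x^1)/2 - Real.exp x) x := by
      exact (((hasDerivAt_const x (1:ℝ)).add (hasDerivAt_id x)).add
        ((hasDerivAt_pow 2 x).div_const 2)).sub (Real.hasDerivAt_exp x)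
    convert h1 using 1; ring
  have hanti : Antitone (fun t : ℝ => 1 + t + t^2/2 - Real.exp t) := by
    apply antitone_of_deriv_nonpos
    · exact fun x => (hd x).differentiableAt
    · intro x
      rw [(hd x).deriv]
      have := Real.add_one_le_exp x
      linarith
  have := hanti ht
  simp only [Real.exp_zero] at this
  norm_num at this
  linarith

lemma tsum_tail_exp (y : ℝ) : Real.exp y - 1 - y = ∑' k : ℕ, y^(k+2)/(Nat.factorial (k+2) : ℝ) := by
  have hs := Real.summable_pow_div_factorial y
  have h := Summable.sum_add_tsum_nat_add 2 hs
  have hexp : Real.exp y = ∑' n : ℕ, y^n/(Nat.factorial n : ℝ) := by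
    rw [Real.exp_eq_exp_ℝ, NormedSpace.exp_eq_tsum_div]
  rw [hexp, ← h]
  simp [Finset.sum_range_succ]
  ring

lemma exp_mul_le' {l x : ℝ} (hl : 0 ≤ l) (hx : x ≤ 1) :
    Real.exp (l*x) ≤ 1 + (l*x + (Real.exp l - l - 1) * x^2) := by
  have h : Real.exp (l*x) ≤ 1 + l*x + (Real.exp l - l - 1) * x^2 := by
    rcases le_or_gt 0 x with hx0 | hx0
    · -- 0 ≤ x ≤ 1
      have key : Real.exp (l*x) - 1 - l*x ≤ x^2 * (Real.exp l - l - 1) := by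
        have hl2 : Real.exp l - l - 1 = ∑' k : ℕ, l^(k+2)/(Nat.factorial (k+2) : ℝ) := by
          rw [← tsum_tail_exp l]; ring
        rw [tsum_tail_exp (l*x), hl2]
        rw [← tsum_mul_left]
        apply Summable.tsum_le_tsum
        · intro k
          have hxp : x^(k+2) ≤ x^2 := pow_le_pow_of_le_one hx0 hx (by omega)
          have hlp : (0:ℝ) ≤ l^(k+2) := pow_nonneg hl _
          rw [mul_pow]
          rw [div_le_iff₀ (by positivity : (0:ℝ) < (Nat.factorial (k+2) : ℝ))]
          have : l ^ (k + 2) * x ^ (k + 2) ≤ l ^ (k+2) * x ^ 2 :=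
            mul_le_mul_of_nonneg_left hxp hlp
          calc l ^ (k + 2) * x ^ (k + 2) ≤ l ^ (k+2) * x^2 := this
            _ = x ^ 2 * (l ^ (k + 2) / (Nat.factorial (k+2) : ℝ)) * (Nat.factorial (k+2) : ℝ) := by
                field_simp
        · exact (summable_nat_add_iff 2).2 (Real.summable_pow_div_factorial (l*x))
        · exact ((summable_nat_add_iff 2).2 (Real.summable_pow_div_factorial l)).mul_left _
      nlinarith [sq_nonneg x]
    · -- x < 0
      have h1 : Real.exp (l*x) ≤ 1 + l*x + (l*x)^2/2 :=
        exp_le_quad_of_nonpos (mul_nonpos_of_nonneg_of_nonpos hl hx0.le)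
      have h2 : 1 + l + l^2/2 ≤ Real.exp l := Real.quadratic_le_exp_of_nonneg hl
      nlinarith [sq_nonneg x, sq_nonneg (l*x)]
  linarith

lemma freedman_key {Ω : Type*} {m0 : MeasurableSpace Ω} (μ : Measure Ω)
    [IsProbabilityMeasure μ] (ℱ : Filtration ℕ m0) (n : ℕ) (X : ℕ → Ω → ℝ)
    (hadap : ∀ i ∈ Finset.Icc 1 n, StronglyMeasurable[ℱ i] (X i))
    (hint : ∀ i ∈ Finset.Icc 1 n, Integrable (X i) μ)
    (hint2 : ∀ i ∈ Finset.Icc 1 n, Integrable (fun ω => (X i ω) ^ 2) μ)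
    (hle1 : ∀ i ∈ Finset.Icc 1 n, ∀ᵐ ω ∂μ, X i ω ≤ 1)
    (hsupmart : ∀ i ∈ Finset.Icc 1 n,
      ∀ᵐ ω ∂μ, MeasureTheory.condExp (ℱ (i - 1)) μ (X i) ω ≤ 0)
    (l : ℝ) (hl : 0 ≤ l) :
    ∀ k, k ≤ n → ∫ ω, Real.exp (l * (∑ i ∈ Finset.Icc 1 k, X i ω) -
      (Real.exp l - l - 1) * (∑ i ∈ Finset.Icc 1 k,
        MeasureTheory.condExp (ℱ (i - 1)) μ (fun ω' => (X i ω') ^ 2) ω)) ∂μ ≤ 1 := by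
  have hφ : 0 ≤ Real.exp l - l - 1 := by have := Real.add_one_le_exp l; linarith
  set φ : ℝ := Real.exp l - l - 1 with hφdef
  intro k
  induction k with
  | zero =>
    intro _
    simp [Finset.Icc_eq_empty (by omega : ¬ (1:ℕ) ≤ 0)]
  | succ k ih =>
    intro hk1
    have hk : k ≤ n := Nat.le_of_succ_le hk1
    have ih' := ih hk
    have hmemk1 : k + 1 ∈ Finset.Icc 1 n := Finset.mem_Icc.2 ⟨by omega, hk1⟩
    have hm : ℱ k ≤ m0 := ℱ.le k
    set S : Ω → ℝ := fun ω => ∑ i ∈ Finset.Icc 1 k, X i ω with hSdef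
    set V : Ω → ℝ := fun ω => ∑ i ∈ Finset.Icc 1 k,
      MeasureTheory.condExp (ℱ (i - 1)) μ (fun ω' => (X i ω') ^ 2) ω with hVdef
    set Y : Ω → ℝ := X (k+1) with hYdef
    set c : Ω → ℝ := MeasureTheory.condExp (ℱ k) μ (fun ω' => (Y ω') ^ 2) with hcdef
    -- rewrite goal sums
    have hsum1 : ∀ ω, ∑ i ∈ Finset.Icc 1 (k+1), X i ω = S ω + Y ω := by
      intro ω; rw [Finset.sum_Icc_succ_top (by omega : 1 ≤ k + 1)]
    have hsum2 : ∀ ω, (∑ i ∈ Finset.Icc 1 (k+1),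
        MeasureTheory.condExp (ℱ (i - 1)) μ (fun ω' => (X i ω') ^ 2) ω) = V ω + c ω := by
      intro ω; rw [Finset.sum_Icc_succ_top (by omega : 1 ≤ k + 1)]
      rfl
    -- basic facts
    have hYm : AEStronglyMeasurable Y μ :=
      ((hadap (k+1) hmemk1).mono (ℱ.le (k+1))).aestronglyMeasurable
    have hY1 : ∀ᵐ ω ∂μ, Y ω ≤ 1 := hle1 (k+1) hmemk1
    have hYint : Integrable Y μ := hint (k+1) hmemk1
    have hY2int : Integrable (fun ω => (Y ω)^2) μ := hint2 (k+1) hmemk1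
    have hSM_S : StronglyMeasurable[ℱ k] S := by
      apply Finset.stronglyMeasurable_fun_sum
      intro i hi
      rw [Finset.mem_Icc] at hi
      exact (hadap i (Finset.mem_Icc.2 ⟨hi.1, le_trans hi.2 hk⟩)).mono (ℱ.mono hi.2)
    have hSM_V : StronglyMeasurable[ℱ k] V := by
      apply Finset.stronglyMeasurable_fun_sum
      intro i hi
      rw [Finset.mem_Icc] at hi
      exact stronglyMeasurable_condExp.mono (ℱ.mono (by omega))
    have hSM_c : StronglyMeasurable[ℱ k] c := stronglyMeasurable_condExp
    have hc0 : ∀ᵐ ω ∂μ, 0 ≤ c ω :=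
      condExp_nonneg (Filter.Eventually.of_forall (fun ω => sq_nonneg _))
    have hV0 : ∀ᵐ ω ∂μ, 0 ≤ V ω := by
      have h : ∀ᵐ ω ∂μ, ∀ i ∈ Finset.Icc 1 k, 0 ≤
          MeasureTheory.condExp (ℱ (i - 1)) μ (fun ω' => (X i ω') ^ 2) ω := by
        rw [Filter.eventually_all_finset]
        intro i hi
        exact condExp_nonneg (Filter.Eventually.of_forall (fun ω => sq_nonneg _))
      filter_upwards [h] with ω hω
      exact Finset.sum_nonneg hω
    have hSk : ∀ᵐ ω ∂μ, S ω ≤ k := by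
      have h : ∀ᵐ ω ∂μ, ∀ i ∈ Finset.Icc 1 k, X i ω ≤ 1 := by
        rw [Filter.eventually_all_finset]
        intro i hi
        rw [Finset.mem_Icc] at hi
        exact hle1 i (Finset.mem_Icc.2 ⟨hi.1, le_trans hi.2 hk⟩)
      filter_upwards [h] with ω hω
      calc S ω ≤ ∑ i ∈ Finset.Icc 1 k, (1:ℝ) := Finset.sum_le_sum hω
        _ = k := by simp [Nat.card_Icc]
    -- the factors
    set G : Ω → ℝ := fun ω => Real.exp (l * S ω - φ * (V ω + c ω)) with hGdef
    set E : Ω → ℝ := fun ω => Real.exp (l * Y ω) with hEdef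
    have hG_SM : StronglyMeasurable[ℱ k] G :=
      Real.continuous_exp.comp_stronglyMeasurable
        ((stronglyMeasurable_const.mul hSM_S).sub
          (stronglyMeasurable_const.mul (hSM_V.add hSM_c)))
    have hG0 : ∀ ω, 0 ≤ G ω := fun ω => (Real.exp_pos _).le
    have hGbd : ∀ᵐ ω ∂μ, G ω ≤ Real.exp (l * k) := by
      filter_upwards [hSk, hV0, hc0] with ω h1 h2 h3
      apply Real.exp_le_exp.2
      have : l * S ω ≤ l * k := mul_le_mul_of_nonneg_left h1 hl
      nlinarith
    have hEm : AEStronglyMeasurable E μ :=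
      Real.continuous_exp.comp_aestronglyMeasurable (aestronglyMeasurable_const.mul hYm)
    have hEbd : ∀ᵐ ω ∂μ, E ω ≤ Real.exp l := by
      filter_upwards [hY1] with ω h1
      exact Real.exp_le_exp.2 (by nlinarith)
    have hEint : Integrable E μ := by
      apply (integrable_const (Real.exp l)).mono' hEm
      filter_upwards [hEbd] with ω h1
      rw [Real.norm_eq_abs, abs_of_pos (Real.exp_pos _)]
      exact h1
    have hGEint : Integrable (G * E) μ := by
      apply (integrable_const (Real.exp (l * k) * Real.exp l)).mono'
        (((hG_SM.mono hm).aestronglyMeasurable).mul hEm)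
      filter_upwards [hGbd, hEbd] with ω h1 h2
      rw [Pi.mul_apply, Real.norm_eq_abs,
        abs_of_nonneg (mul_nonneg (hG0 ω) (Real.exp_pos _).le)]
      exact mul_le_mul h1 h2 (Real.exp_pos _).le (Real.exp_pos _).le
    have hMmeas : AEStronglyMeasurable (fun ω => Real.exp (l * S ω - φ * V ω)) μ := by
      have h2 : StronglyMeasurable (fun ω => l * S ω - φ * V ω) :=
        ((hSM_S.mono hm).const_mul l).sub ((hSM_V.mono hm).const_mul φ)
      exact (Real.continuous_exp.comp_stronglyMeasurable h2).aestronglyMeasurable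
    have hMkint : Integrable (fun ω => Real.exp (l * S ω - φ * V ω)) μ := by
      apply (integrable_const (Real.exp (l * k))).mono' hMmeas
      filter_upwards [hSk, hV0] with ω h1 h2
      rw [Real.norm_eq_abs, abs_of_pos (Real.exp_pos _)]
      apply Real.exp_le_exp.2
      have : l * S ω ≤ l * k := mul_le_mul_of_nonneg_left h1 hl
      nlinarith
    -- pull-out property
    have hpull : μ[G * E | ℱ k] =ᵐ[μ] G * μ[E | ℱ k] :=
      condExp_mul_of_stronglyMeasurable_left hG_SM hGEint hEint
    -- bound conditional mgf
    set P : Ω → ℝ := fun ω => 1 + (l * Y ω + φ * (Y ω)^2) with hPdef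
    have hPint : Integrable P μ :=
      (integrable_const (1:ℝ)).add ((hYint.const_mul l).add (hY2int.const_mul φ))
    have hEleP : E ≤ᵐ[μ] P := by
      filter_upwards [hY1] with ω h1
      exact exp_mul_le' hl h1
    have hcondEP : μ[E | ℱ k] ≤ᵐ[μ] μ[P | ℱ k] := condExp_mono hEint hPint hEleP
    have hPsplit : μ[P | ℱ k] =ᵐ[μ]
        fun ω => 1 + (l * (μ[Y | ℱ k]) ω + φ * c ω) := by
      have e1 : P = (fun _ => (1:ℝ)) + (l • Y + φ • (fun ω => (Y ω)^2)) := by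
        funext ω
        simp [hPdef, Pi.add_apply, Pi.smul_apply, smul_eq_mul]
      rw [e1]
      have h2 := condExp_add (μ := μ) (m := ℱ k) (integrable_const (1:ℝ))
        ((hYint.smul l).add (hY2int.smul φ))
      refine h2.trans ?_
      have h3 := condExp_add (μ := μ) (m := ℱ k) (hYint.smul l) (hY2int.smul φ)
      have h4 := condExp_smul (μ := μ) (m := ℱ k) l Y
      have h5 := condExp_smul (μ := μ) (m := ℱ k) φ (fun ω => (Y ω)^2)
      filter_upwards [h3, h4, h5] with ω e3 e4 e5
      rw [condExp_const hm]
      simp only [Pi.add_apply] at e3 ⊢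
      rw [e3]
      simp only [Pi.smul_apply, smul_eq_mul] at e4 e5
      rw [e4, e5]
    have hsup : ∀ᵐ ω ∂μ, (μ[Y | ℱ k]) ω ≤ 0 := hsupmart (k+1) hmemk1
    have hcond : μ[E | ℱ k] ≤ᵐ[μ] fun ω => Real.exp (φ * c ω) := by
      filter_upwards [hcondEP, hPsplit, hsup, hc0] with ω h1 h2 h3 h4
      have h5 : l * (μ[Y | ℱ k]) ω ≤ 0 := mul_nonpos_of_nonneg_of_nonpos hl h3
      have h6 := Real.add_one_le_exp (φ * c ω)
      calc (μ[E | ℱ k]) ω ≤ (μ[P | ℱ k]) ω := h1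
        _ = 1 + (l * (μ[Y | ℱ k]) ω + φ * c ω) := h2
        _ ≤ 1 + φ * c ω := by linarith
        _ ≤ Real.exp (φ * c ω) := by linarith
    -- combine
    have hkey : ∀ᵐ ω ∂μ, (μ[G * E | ℱ k]) ω ≤ Real.exp (l * S ω - φ * V ω) := by
      filter_upwards [hpull, hcond] with ω h1 h2
      rw [h1, Pi.mul_apply]
      calc G ω * (μ[E | ℱ k]) ω ≤ G ω * Real.exp (φ * c ω) :=
            mul_le_mul_of_nonneg_left h2 (hG0 ω)
        _ = Real.exp (l * S ω - φ * V ω) := by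
            rw [hGdef]
            simp only
            rw [← Real.exp_add]
            ring_nf
    calc ∫ ω, Real.exp (l * (∑ i ∈ Finset.Icc 1 (k+1), X i ω) -
          φ * (∑ i ∈ Finset.Icc 1 (k+1),
            MeasureTheory.condExp (ℱ (i - 1)) μ (fun ω' => (X i ω') ^ 2) ω)) ∂μ
        = ∫ ω, (G * E) ω ∂μ := by
          congr 1
          funext ω
          rw [hsum1 ω, hsum2 ω, Pi.mul_apply, hGdef, hEdef]
          simp only
          rw [← Real.exp_add]
          ring_nf
      _ = ∫ ω, (μ[G * E | ℱ k]) ω ∂μ := (integral_condExp hm).symm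
      _ ≤ ∫ ω, Real.exp (l * S ω - φ * V ω) ∂μ :=
          integral_mono_ae integrable_condExp hMkint hkey
      _ ≤ 1 := ih'

theorem stmt_6 {Ω : Type*} {m0 : MeasurableSpace Ω} (μ : Measure Ω)
    [IsProbabilityMeasure μ] (ℱ : Filtration ℕ m0) (n : ℕ) (X : ℕ → Ω → ℝ)
    (hadap : ∀ i ∈ Finset.Icc 1 n, StronglyMeasurable[ℱ i] (X i))
    (hint : ∀ i ∈ Finset.Icc 1 n, Integrable (X i) μ)
    (hint2 : ∀ i ∈ Finset.Icc 1 n, Integrable (fun ω => (X i ω) ^ 2) μ)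
    (hle1 : ∀ i ∈ Finset.Icc 1 n, ∀ᵐ ω ∂μ, X i ω ≤ 1)
    (hsupmart : ∀ i ∈ Finset.Icc 1 n,
      ∀ᵐ ω ∂μ, MeasureTheory.condExp (ℱ (i - 1)) μ (X i) ω ≤ 0)
    (a b : ℝ) (ha : 0 ≤ a) (hb : 0 < b) :
    μ {ω | a ≤ ∑ i ∈ Finset.Icc 1 n, X i ω ∧
        (∑ i ∈ Finset.Icc 1 n,
          MeasureTheory.condExp (ℱ (i - 1)) μ (fun ω' => (X i ω') ^ 2) ω) ≤ b} ≤
      ENNReal.ofReal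
        (Real.exp (-(b * ((1 + a / b) * Real.log (1 + a / b) - a / b)))) := by
  have hab : (0:ℝ) < 1 + a / b := by positivity
  set l : ℝ := Real.log (1 + a / b) with hldef
  have hl : 0 ≤ l := Real.log_nonneg (by nlinarith [div_nonneg ha hb.le])
  have hexpl : Real.exp l = 1 + a / b := Real.exp_log hab
  set φ : ℝ := Real.exp l - l - 1 with hφdef
  have hφ : 0 ≤ φ := by have := Real.add_one_le_exp l; simp only [hφdef]; linarith
  set Sn : Ω → ℝ := fun ω => ∑ i ∈ Finset.Icc 1 n, X i ω with hSdef
  set Vn : Ω → ℝ := fun ω => ∑ i ∈ Finset.Icc 1 n,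
    MeasureTheory.condExp (ℱ (i - 1)) μ (fun ω' => (X i ω') ^ 2) ω with hVdef
  set M : Ω → ℝ := fun ω => Real.exp (l * Sn ω - φ * Vn ω) with hMdef
  have hintM : ∫ ω, M ω ∂μ ≤ 1 :=
    freedman_key μ ℱ n X hadap hint hint2 hle1 hsupmart l hl n le_rfl
  -- measurability and integrability of M
  have hSM_S : StronglyMeasurable[m0] Sn := by
    apply Finset.stronglyMeasurable_fun_sum
    intro i hi
    exact (hadap i hi).mono (ℱ.le i)
  have hSM_V : StronglyMeasurable[m0] Vn := by
    apply Finset.stronglyMeasurable_fun_sum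
    intro i hi
    exact stronglyMeasurable_condExp.mono (ℱ.le (i-1))
  have hSn : ∀ᵐ ω ∂μ, Sn ω ≤ n := by
    have h : ∀ᵐ ω ∂μ, ∀ i ∈ Finset.Icc 1 n, X i ω ≤ 1 := by
      rw [Filter.eventually_all_finset]
      exact hle1
    filter_upwards [h] with ω hω
    calc Sn ω ≤ ∑ i ∈ Finset.Icc 1 n, (1:ℝ) := Finset.sum_le_sum hω
      _ ≤ n := by simp [Nat.card_Icc]
  have hVn : ∀ᵐ ω ∂μ, 0 ≤ Vn ω := by
    have h : ∀ᵐ ω ∂μ, ∀ i ∈ Finset.Icc 1 n, 0 ≤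
        MeasureTheory.condExp (ℱ (i - 1)) μ (fun ω' => (X i ω') ^ 2) ω := by
      rw [Filter.eventually_all_finset]
      intro i hi
      exact condExp_nonneg (Filter.Eventually.of_forall (fun ω => sq_nonneg _))
    filter_upwards [h] with ω hω
    exact Finset.sum_nonneg hω
  have hMmeas : AEStronglyMeasurable M μ := by
    have h2 : StronglyMeasurable (fun ω => l * Sn ω - φ * Vn ω) :=
      (hSM_S.const_mul l).sub (hSM_V.const_mul φ)
    exact (Real.continuous_exp.comp_stronglyMeasurable h2).aestronglyMeasurable
  have hMint : Integrable M μ := by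
    apply (integrable_const (Real.exp (l * n))).mono' hMmeas
    filter_upwards [hSn, hVn] with ω h1 h2
    rw [Real.norm_eq_abs, abs_of_pos (Real.exp_pos _)]
    apply Real.exp_le_exp.2
    have : l * Sn ω ≤ l * n := mul_le_mul_of_nonneg_left h1 hl
    nlinarith
  -- Markov
  set ε : ℝ := Real.exp (l * a - φ * b) with hεdef
  have hεpos : 0 < ε := Real.exp_pos _
  have hsub : {ω | a ≤ Sn ω ∧ Vn ω ≤ b} ⊆ {ω | ε ≤ M ω} := by
    intro ω hω
    obtain ⟨h1, h2⟩ := hω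
    apply Real.exp_le_exp.2
    have h3 : l * a ≤ l * Sn ω := mul_le_mul_of_nonneg_left h1 hl
    have h4 : φ * Vn ω ≤ φ * b := mul_le_mul_of_nonneg_left h2 hφ
    linarith
  have hmarkov := mul_meas_ge_le_integral_of_nonneg
    (Filter.Eventually.of_forall (fun ω => (Real.exp_pos (l * Sn ω - φ * Vn ω)).le))
    hMint ε
  have hA : μ {ω | a ≤ Sn ω ∧ Vn ω ≤ b} ≤ μ {ω | ε ≤ M ω} := measure_mono hsub
  have htoReal : (μ {ω | a ≤ Sn ω ∧ Vn ω ≤ b}).toReal ≤ Real.exp (φ * b - l * a) := by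
    have h1 : (μ {ω | a ≤ Sn ω ∧ Vn ω ≤ b}).toReal ≤ (μ {ω | ε ≤ M ω}).toReal :=
      ENNReal.toReal_mono (measure_ne_top _ _) hA
    have h2 : ε * (μ {ω | ε ≤ M ω}).toReal ≤ 1 := le_trans hmarkov hintM
    have h3 : (μ {ω | ε ≤ M ω}).toReal ≤ 1 / ε := by
      rw [le_div_iff₀ hεpos]
      linarith [h2]
    have h4 : 1 / ε = Real.exp (φ * b - l * a) := by
      rw [one_div, hεdef, ← Real.exp_neg]
      congr 1
      ring
    linarith [h1, h3.trans_eq h4]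
  have hfinal : Real.exp (φ * b - l * a) =
      Real.exp (-(b * ((1 + a / b) * Real.log (1 + a / b) - a / b))) := by
    congr 1
    rw [hφdef, hexpl, ← hldef]
    field_simp
    ring
  rw [← hfinal]
  rw [ENNReal.le_ofReal_iff_toReal_le (measure_ne_top _ _) (Real.exp_pos _).le]
  exact htoReal
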